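/- There exists a universal constant c > 0 such that for every d ≥ 1 and every A ⊆ K with ∅ ≠ A ≠ K, the cut function h' of the noise sparsifier H for G_d satisfies the small-set expansion bound h'(A) ≥ c · bal(A) · k · min(ln(1/bal(A)), √d), where bal(A) = min(|A|, k−|A|)/k and k = 2^d. -/

import Mathlib

open Finset

/-- Vertices of the `d`-dimensional Boolean hypercube. -/
abbrev Cube (d : ℕ) := Fin d → Bool

/-- Hamming distance between two Boolean strings. -/
def hamm {d : ℕ} (s t : Cube d) : ℕ := (Finset.univ.filter fun i => s i ≠ t i).card

/-- The vertex set of the graph `G_d`: `Sum.inl s` is the hypercube vertex `y_s`,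
`Sum.inr s` is the terminal `z_s`. -/
abbrev Vtx (d : ℕ) := Cube d ⊕ Cube d

/-- Edge capacities of the graph `G_d`: hypercube edges (Hamming distance `1`) have
capacity `1`, each terminal `z_s` is attached to `y_s` by an edge of capacity `√d`. -/
noncomputable def gCap (d : ℕ) : Vtx d → Vtx d → ℝ
  | Sum.inl s, Sum.inl t => if hamm s t = 1 then 1 else 0
  | Sum.inl s, Sum.inr t => if s = t then Real.sqrt d else 0
  | Sum.inr s, Sum.inl t => if s = t then Real.sqrt d else 0
  | Sum.inr _, Sum.inr _ => 0

/-- The cut function of a capacitated graph: total capacity of edges crossing `A`.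
(Each unordered crossing edge `{u,v}` with `u ∈ A`, `v ∉ A` is counted once.) -/
noncomputable def cutFun {V : Type*} [Fintype V] [DecidableEq V]
    (c : V → V → ℝ) (A : Finset V) : ℝ :=
  ∑ u ∈ A, ∑ v ∈ Aᶜ, c u v

/-- The terminal set `K = {z_s}` of `G_d`. -/
def Kset (d : ℕ) : Finset (Vtx d) := Finset.univ.image Sum.inr

/-- The terminal cut function: `h_K(U) = min { h(A) : A ∩ K = U }`. -/
noncomputable def termCut {V : Type*} [Fintype V] [DecidableEq V]
    (c : V → V → ℝ) (K U : Finset V) : ℝ :=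
  sInf {x : ℝ | ∃ A : Finset V, A ∩ K = U ∧ cutFun c A = x}

/-- The terminal cut function of `G_d`, for a set `A` of terminals (identified with
Boolean strings). -/
noncomputable def hK (d : ℕ) (A : Finset (Cube d)) : ℝ :=
  termCut (gCap d) (Kset d) (A.image Sum.inr)

/-- The flip probability `p = (1 - ρ)/2` where `ρ = 1 - 1/√d`. -/
noncomputable def noiseP (d : ℕ) : ℝ := (1 - (1 - 1 / Real.sqrt d)) / 2

/-- Capacities of the noise sparsifier `H`:
`c_H(z_s, z_t) = √d · p^{Hamm(s,t)} · (1-p)^{d - Hamm(s,t)}` for `s ≠ t`. -/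
noncomputable def noiseCap (d : ℕ) (s t : Cube d) : ℝ :=
  if s = t then 0
  else Real.sqrt d * noiseP d ^ hamm s t * (1 - noiseP d) ^ (d - hamm s t)

/-- The balance of a subset `A` of the `2^d` terminals: `min(|A|, k - |A|)/k`. -/
noncomputable def bal (d : ℕ) (A : Finset (Cube d)) : ℝ :=
  (min A.card (2 ^ d - A.card) : ℕ) / (2 ^ d : ℝ)

lemma mono_aux {f f' : ℝ → ℝ} (hc : ContinuousOn f (Set.Icc 0 1))
    (hd : ∀ x ∈ Set.Ioo (0:ℝ) 1, HasDerivAt f (f' x) x)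
    (h0 : ∀ x ∈ Set.Ioo (0:ℝ) 1, 0 ≤ f' x) :
    ∀ x ∈ Set.Icc (0:ℝ) 1, f 0 ≤ f x := by
  intro x hx
  have hmono := monotoneOn_of_deriv_nonneg (convex_Icc (0:ℝ) 1) hc ?_ ?_
  · exact hmono (Set.left_mem_Icc.2 zero_le_one) hx hx.1
  · rw [interior_Icc]
    exact fun y hy => ((hd y hy).differentiableAt).differentiableWithinAt
  · rw [interior_Icc]
    intro y hy
    rw [(hd y hy).deriv]
    exact h0 y hy

lemma hasDerivAt_one_add_rpow {p x : ℝ} (hx : -1 < x) :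
    HasDerivAt (fun y : ℝ => (1+y) ^ p) (p * (1+x) ^ (p-1)) x := by
  have h1 : HasDerivAt (fun y : ℝ => 1 + y) 1 x := (hasDerivAt_id x).const_add 1
  have h2 := (Real.hasDerivAt_rpow_const (x := 1+x) (p := p) (Or.inl (by linarith)))
  exact (h2.comp x h1).congr_deriv (by ring)

lemma hasDerivAt_one_sub_rpow {p x : ℝ} (hx : x < 1) :
    HasDerivAt (fun y : ℝ => (1-y) ^ p) (-(p * (1-x) ^ (p-1))) x := by
  have h1 : HasDerivAt (fun y : ℝ => 1 - y) (-1) x := (hasDerivAt_id x).neg.const_add 1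
  have h2 := (Real.hasDerivAt_rpow_const (x := 1-x) (p := p) (Or.inl (by linarith)))
  have := h2.comp x h1
  exact this.congr_deriv (by ring)

-- step G : (1+x)^(q-1) - (1-x)^(q-1) ≥ 2*(q-1)*x on [0,1]
lemma step_G {q : ℝ} (hq1 : 1 ≤ q) (hq2 : q ≤ 2) {x : ℝ} (hx : x ∈ Set.Icc (0:ℝ) 1) :
    2*(q-1)*x ≤ (1+x) ^ (q-1) - (1-x) ^ (q-1) := by
  have key := mono_aux (f := fun y => (1+y) ^ (q-1) - (1-y) ^ (q-1) - 2*(q-1)*y)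
      (f' := fun y => (q-1) * (1+y) ^ (q-2) + (q-1) * (1-y) ^ (q-2) - 2*(q-1)) ?_ ?_ ?_ x hx
  · simp only [add_zero, sub_zero, mul_zero, Real.one_rpow, sub_self] at key
    linarith
  · apply ContinuousOn.sub
    apply ContinuousOn.sub
    · exact (ContinuousOn.rpow_const (by fun_prop) (fun y _ => Or.inr (by linarith)))
    · exact (ContinuousOn.rpow_const (by fun_prop) (fun y _ => Or.inr (by linarith)))
    · fun_prop
  · intro y hy
    have d1 := hasDerivAt_one_add_rpow (p := q-1) (x := y) (by linarith [hy.1])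
    have d2 := hasDerivAt_one_sub_rpow (p := q-1) (x := y) hy.2
    have d3 : HasDerivAt (fun y : ℝ => 2*(q-1)*y) (2*(q-1)) y := by
      simpa using (hasDerivAt_id y).const_mul (2*(q-1))
    have := (d1.sub d2).sub d3
    refine this.congr_deriv ?_
    ring_nf
  · intro y hy
    show 0 ≤ (q-1) * (1+y) ^ (q-2) + (q-1) * (1-y) ^ (q-2) - 2*(q-1)
    have h1p : (0:ℝ) < 1 + y := by linarith [hy.1]
    have h1m : (0:ℝ) < 1 - y := by linarith [hy.2]
    have hprod : (1:ℝ) ≤ (1+y) ^ (q-2) * (1-y) ^ (q-2) := by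
      rw [← Real.mul_rpow h1p.le h1m.le]
      apply Real.one_le_rpow_of_pos_of_le_one_of_nonpos
      · nlinarith [sq_nonneg y]
      · nlinarith [sq_nonneg y]
      · linarith
    have hP : (0:ℝ) < (1+y) ^ (q-2) := Real.rpow_pos_of_pos h1p _
    have hS : (0:ℝ) < (1-y) ^ (q-2) := Real.rpow_pos_of_pos h1m _
    have hsum : (2:ℝ) ≤ (1+y) ^ (q-2) + (1-y) ^ (q-2) := by
      nlinarith [sq_nonneg ((1+y) ^ (q-2) - (1-y) ^ (q-2))]
    nlinarith [hsum]

-- core: (1+x)^q + (1-x)^q ≥ 2 + q(q-1) x^2 on [-1,1]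
lemma core_ineq {q : ℝ} (hq1 : 1 ≤ q) (hq2 : q ≤ 2) {x : ℝ} (hx : x ∈ Set.Icc (-1:ℝ) 1) :
    2 + q * (q-1) * x^2 ≤ (1+x) ^ q + (1-x) ^ q := by
  -- reduce to [0,1]
  suffices h : ∀ y ∈ Set.Icc (0:ℝ) 1, 2 + q * (q-1) * y^2 ≤ (1+y) ^ q + (1-y) ^ q by
    rcases le_or_gt 0 x with hx0 | hx0
    · exact h x ⟨hx0, hx.2⟩
    · have := h (-x) ⟨by linarith, by linarith [hx.1]⟩
      rw [show (1:ℝ) + -x = 1 - x by ring, show (1:ℝ) - -x = 1 + x by ring] at this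
      calc 2 + q * (q-1) * x^2 = 2 + q * (q-1) * (-x)^2 := by ring_nf
        _ ≤ _ := by linarith [this]
  intro y hy
  have key := mono_aux (f := fun z => (1+z) ^ q + (1-z) ^ q - 2 - q*(q-1)*z^2)
      (f' := fun z => q * ((1+z) ^ (q-1) - (1-z) ^ (q-1) - 2*(q-1)*z)) ?_ ?_ ?_ y hy
  · simp only [add_zero, sub_zero, Real.one_rpow] at key
    nlinarith [key]
  · apply ContinuousOn.sub
    apply ContinuousOn.sub
    apply ContinuousOn.add
    · exact (ContinuousOn.rpow_const (by fun_prop) (fun z _ => Or.inr (by linarith)))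
    · exact (ContinuousOn.rpow_const (by fun_prop) (fun z _ => Or.inr (by linarith)))
    · fun_prop
    · fun_prop
  · intro z hz
    have d1 := hasDerivAt_one_add_rpow (p := q) (x := z) (by linarith [hz.1])
    have d2 := hasDerivAt_one_sub_rpow (p := q) (x := z) hz.2
    have d3 : HasDerivAt (fun z : ℝ => q*(q-1)*z^2) (q*(q-1)*(2*z)) z := by
      have := (hasDerivAt_pow 2 z).const_mul (q*(q-1))
      simpa using this
    have := ((d1.add d2).sub_const 2).sub d3
    refine this.congr_deriv ?_
    ring
  · intro z hz
    show 0 ≤ q * ((1+z) ^ (q-1) - (1-z) ^ (q-1) - 2*(q-1)*z)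
    have := step_G hq1 hq2 (x := z) ⟨hz.1.le, hz.2.le⟩
    have hq0 : (0:ℝ) ≤ q := by linarith
    nlinarith

lemma two_point_single {ρ : ℝ} (hρ0 : 0 ≤ ρ) (hρ1 : ρ ≤ 1) {a b : ℝ} (ha : 0 ≤ a) (hb : 0 ≤ b) :
    ((a+b)/2)^2 + ρ * ((a-b)/2)^2 ≤ ((a ^ (1+ρ) + b ^ (1+ρ))/2) ^ (2/(1+ρ)) := by
  set q : ℝ := 1 + ρ with hq
  have hq1 : 1 ≤ q := by simp [hq]; linarith
  have hq2 : q ≤ 2 := by simp [hq]; linarith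
  have hqpos : 0 < q := by linarith
  clear_value q
  set u : ℝ := (a+b)/2 with hu
  set v : ℝ := (a-b)/2 with hv
  clear_value u v
  rcases eq_or_lt_of_le (show (0:ℝ) ≤ u by rw [hu]; positivity) with h0 | hupos
  · -- a = b = 0
    have ha0 : a = 0 := by rw [hu] at h0; linarith
    have hb0 : b = 0 := by rw [hu] at h0; linarith
    subst ha0; subst hb0
    rw [hu, hv]
    rw [Real.zero_rpow hqpos.ne']
    norm_num
    rw [Real.zero_rpow (by positivity)]
  · set x : ℝ := v / u with hx
    clear_value x
    have hxabs : x ∈ Set.Icc (-1:ℝ) 1 := by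
      constructor
      · rw [hx, le_div_iff₀ hupos]
        simp only [hu, hv]; linarith
      · rw [hx, div_le_iff₀ hupos]
        simp only [hu, hv]; linarith
    have hvux : u * x = v := by rw [hx]; field_simp
    have hax : a = u * (1 + x) := by
      rw [mul_add, mul_one, hvux, hu, hv]; ring
    have hbx : b = u * (1 - x) := by
      rw [mul_sub, mul_one, hvux, hu, hv]; ring
    have hx1p : (0:ℝ) ≤ 1 + x := by linarith [hxabs.1]
    have hx1m : (0:ℝ) ≤ 1 - x := by linarith [hxabs.2]
    have hsum : (a ^ q + b ^ q)/2 = u ^ q * (((1+x) ^ q + (1-x) ^ q)/2) := by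
      rw [hax, hbx, Real.mul_rpow hupos.le hx1p, Real.mul_rpow hupos.le hx1m]
      ring
    have hcore := core_ineq hq1 hq2 hxabs
    have hs0 : 0 ≤ q*(q-1)/2 * x^2 :=
      mul_nonneg (div_nonneg (by nlinarith) (by norm_num)) (sq_nonneg x)
    have hupow : (0:ℝ) ≤ u ^ q := (Real.rpow_pos_of_pos hupos q).le
    have hmid : u ^ q * (1 + q*(q-1)/2 * x^2) ≤ (a ^ q + b ^ q)/2 := by
      rw [hsum]
      have e3 : (2 + q*(q-1)*x^2)/2 = 1 + q*(q-1)/2 * x^2 := by ring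
      have h1 : (1 + q*(q-1)/2 * x^2) ≤ ((1+x) ^ q + (1-x) ^ q)/2 := by
        rw [← e3]
        linarith [hcore]
      nlinarith
    have h2q : (1:ℝ) ≤ 2/q := by
      rw [le_div_iff₀ hqpos]; linarith
    have hberno : 1 + (2/q) * (q*(q-1)/2 * x^2) ≤ (1 + q*(q-1)/2 * x^2) ^ (2/q) :=
      one_add_mul_self_le_rpow_one_add (by linarith) h2q
    have hmono : (u ^ q * (1 + q*(q-1)/2 * x^2)) ^ (2/q) ≤ ((a ^ q + b ^ q)/2) ^ (2/q) :=
      Real.rpow_le_rpow (mul_nonneg hupow (by linarith)) hmid (by positivity)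
    have hsplit : (u ^ q * (1 + q*(q-1)/2 * x^2)) ^ (2/q)
        = (u^2) * (1 + q*(q-1)/2 * x^2) ^ (2/q) := by
      rw [Real.mul_rpow hupow (by linarith)]
      congr 1
      rw [← Real.rpow_natCast u 2, ← Real.rpow_mul hupos.le]
      congr 1
      field_simp
      norm_num
    have hfin : u^2 * (1 + (2/q) * (q*(q-1)/2 * x^2)) ≤ ((a ^ q + b ^ q)/2) ^ (2/q) := by
      calc u^2 * (1 + (2/q) * (q*(q-1)/2 * x^2)) ≤ u^2 * ((1 + q*(q-1)/2 * x^2) ^ (2/q)) := by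
            apply mul_le_mul_of_nonneg_left hberno (by positivity)
        _ = (u ^ q * (1 + q*(q-1)/2 * x^2)) ^ (2/q) := hsplit.symm
        _ ≤ _ := hmono
    have hexp : (2/q) * (q*(q-1)/2 * x^2) = ρ * x^2 := by
      field_simp [hq]
      rw [hq]; ring
    rw [hexp] at hfin
    calc u^2 + ρ * v^2 = u^2 * (1 + ρ * x^2) := by rw [← hvux]; ring
      _ ≤ _ := hfin

lemma two_point {ρ : ℝ} (hρ0 : 0 ≤ ρ) (hρ1 : ρ ≤ 1) {a b c e : ℝ}
    (ha : 0 ≤ a) (hb : 0 ≤ b) (hc : 0 ≤ c) (he : 0 ≤ e) :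
    (1+ρ)/4 * (a*c + b*e) + (1-ρ)/4 * (a*e + b*c)
      ≤ ((a ^ (1+ρ) + b ^ (1+ρ))/2) ^ (1/(1+ρ)) * ((c ^ (1+ρ) + e ^ (1+ρ))/2) ^ (1/(1+ρ)) := by
  set q : ℝ := 1 + ρ with hq
  have hqpos : (0:ℝ) < q := by simp only [hq]; linarith
  set u1 : ℝ := (a+b)/2 with hu1
  set v1 : ℝ := (a-b)/2 with hv1
  set u2 : ℝ := (c+e)/2 with hu2
  set v2 : ℝ := (c-e)/2 with hv2
  set P : ℝ := u1^2 + ρ * v1^2 with hP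
  set Q : ℝ := u2^2 + ρ * v2^2 with hQ
  set M1 : ℝ := ((a ^ q + b ^ q)/2) ^ (1/q) with hM1
  set M2 : ℝ := ((c ^ q + e ^ q)/2) ^ (1/q) with hM2
  clear_value q u1 v1 u2 v2 P Q M1 M2
  have hM1nn : 0 ≤ M1 := hM1 ▸ Real.rpow_nonneg (by positivity) _
  have hM2nn : 0 ≤ M2 := hM2 ▸ Real.rpow_nonneg (by positivity) _
  have hsq : ∀ X : ℝ, 0 ≤ X → (X ^ (1/q))^2 = X ^ (2/q) := by
    intro X hX
    rw [← Real.rpow_natCast (X ^ (1/q)) 2, ← Real.rpow_mul hX]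
    congr 1
    push_cast
    ring
  have hM1sq : P ≤ M1^2 := by
    have h := two_point_single hρ0 hρ1 ha hb
    rw [hM1, hsq _ (by positivity), hP, hu1, hv1, hq]
    exact h
  have hM2sq : Q ≤ M2^2 := by
    have h := two_point_single hρ0 hρ1 hc he
    rw [hM2, hsq _ (by positivity), hQ, hu2, hv2, hq]
    exact h
  have hLHS : (1+ρ)/4 * (a*c + b*e) + (1-ρ)/4 * (a*e + b*c) = u1*u2 + ρ*(v1*v2) := by
    rw [hu1, hv1, hu2, hv2]
    ring
  have hCS : (u1*u2 + ρ*(v1*v2))^2 ≤ P * Q := by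
    rw [hP, hQ]
    nlinarith [mul_nonneg hρ0 (sq_nonneg (u1*v2 - u2*v1)),
      mul_nonneg (mul_nonneg hρ0 (sub_nonneg.2 hρ1)) (sq_nonneg (v1*v2))]
  have hPnn : 0 ≤ P := by rw [hP]; positivity
  have hQnn : 0 ≤ Q := by rw [hQ]; positivity
  have step : u1*u2 + ρ*(v1*v2) ≤ Real.sqrt (P*Q) := by
    calc u1*u2 + ρ*(v1*v2) ≤ |u1*u2 + ρ*(v1*v2)| := le_abs_self _
      _ = Real.sqrt ((u1*u2 + ρ*(v1*v2))^2) := (Real.sqrt_sq_eq_abs _).symm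
      _ ≤ Real.sqrt (P*Q) := Real.sqrt_le_sqrt hCS
  have step2 : Real.sqrt (P*Q) ≤ M1 * M2 := by
    have hPQ : P * Q ≤ M1^2 * M2^2 := mul_le_mul hM1sq hM2sq hQnn (sq_nonneg M1)
    calc Real.sqrt (P*Q) ≤ Real.sqrt (M1^2 * M2^2) := Real.sqrt_le_sqrt hPQ
      _ = M1 * M2 := by
          rw [show M1^2 * M2^2 = (M1*M2)^2 by ring, Real.sqrt_sq (by positivity)]
  rw [hq, hLHS]
  exact step.trans step2

noncomputable def wB (ρ : ℝ) (b c : Bool) : ℝ := if b = c then (1+ρ)/4 else (1-ρ)/4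

noncomputable def Wt (ρ : ℝ) {n : ℕ} (s t : Fin n → Bool) : ℝ := ∏ i, wB ρ (s i) (t i)

lemma wB_nonneg {ρ : ℝ} (hρ0 : 0 ≤ ρ) (hρ1 : ρ ≤ 1) (b c : Bool) : 0 ≤ wB ρ b c := by
  unfold wB; split <;> linarith

lemma sum_cube_succ {n : ℕ} (F : (Fin (n+1) → Bool) → ℝ) :
    ∑ s : Fin (n+1) → Bool, F s = ∑ b : Bool, ∑ s : Fin n → Bool, F (Fin.cons b s) := by
  rw [← (Fin.consEquiv (fun _ => Bool)).sum_comp F, Fintype.sum_prod_type]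
  rfl

lemma Wt_cons {ρ : ℝ} {n : ℕ} (b c : Bool) (s t : Fin n → Bool) :
    Wt ρ (Fin.cons b s) (Fin.cons c t) = wB ρ b c * Wt ρ s t := by
  unfold Wt
  rw [Fin.prod_univ_succ]
  simp

lemma Wt_rowsum {ρ : ℝ} : ∀ {n : ℕ} (s : Fin n → Bool),
    ∑ t : Fin n → Bool, Wt ρ s t = (1/2) ^ n := by
  intro n
  induction n with
  | zero => intro s; simp [Wt]
  | succ n ih =>
    intro s
    rw [sum_cube_succ (fun t => Wt ρ s t)]
    have hs : s = Fin.cons (s 0) (Fin.tail s) := (Fin.cons_self_tail s).symm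
    calc ∑ b : Bool, ∑ t : Fin n → Bool, Wt ρ s (Fin.cons b t)
        = ∑ b : Bool, ∑ t : Fin n → Bool, wB ρ (s 0) b * Wt ρ (Fin.tail s) t := by
          apply Finset.sum_congr rfl; intro b _
          apply Finset.sum_congr rfl; intro t _
          conv_lhs => rw [hs]
          rw [Wt_cons]
      _ = (∑ b : Bool, wB ρ (s 0) b) * ((1/2) ^ n) := by
          rw [Finset.sum_mul]
          apply Finset.sum_congr rfl; intro b _
          rw [← Finset.mul_sum, ih]
      _ = (1/2) ^ (n+1) := by
          have : ∑ b : Bool, wB ρ (s 0) b = 1/2 := by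
            rw [Fintype.sum_bool]
            unfold wB
            rcases (s 0) <;> simp <;> ring
          rw [this]; ring

lemma tensor {ρ : ℝ} (hρ0 : 0 ≤ ρ) (hρ1 : ρ ≤ 1) :
    ∀ (n : ℕ) (f g : (Fin n → Bool) → ℝ), (∀ s, 0 ≤ f s) → (∀ s, 0 ≤ g s) →
    ∑ s : Fin n → Bool, ∑ t : Fin n → Bool, Wt ρ s t * (f s * g t)
      ≤ ((∑ s : Fin n → Bool, f s ^ (1+ρ)) / 2^n) ^ (1/(1+ρ))
        * ((∑ s : Fin n → Bool, g s ^ (1+ρ)) / 2^n) ^ (1/(1+ρ)) := by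
  have hq : (0:ℝ) < 1+ρ := by linarith
  intro n
  induction n with
  | zero =>
    intro f g hf hg
    have hsum : ∀ (h : (Fin 0 → Bool) → ℝ), ∑ s : Fin 0 → Bool, h s = h default := by
      intro h
      apply Finset.sum_eq_single_of_mem
      · exact Finset.mem_univ _
      · intro x _ hx
        exact ((hx (Subsingleton.elim x default)).elim)
    rw [hsum, hsum, hsum (fun s => f s ^ (1+ρ)), hsum (fun s => g s ^ (1+ρ))]
    have hW : Wt ρ (default : Fin 0 → Bool) default = 1 := by
      unfold Wt; simp
    have hp : ∀ x : ℝ, 0 ≤ x → ((x ^ (1+ρ)) / 2^(0:ℕ)) ^ (1/(1+ρ)) = x := by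
      intro x hx
      rw [pow_zero, div_one, ← Real.rpow_mul hx, mul_one_div, div_self hq.ne', Real.rpow_one]
    rw [hW, hp _ (hf _), hp _ (hg _), one_mul]
  | succ n ih =>
    intro f g hf hg
    set Mf : Bool → ℝ := fun b =>
      ((∑ s : Fin n → Bool, f (Fin.cons b s) ^ (1+ρ)) / 2^n) ^ (1/(1+ρ)) with hMf
    set Mg : Bool → ℝ := fun b =>
      ((∑ s : Fin n → Bool, g (Fin.cons b s) ^ (1+ρ)) / 2^n) ^ (1/(1+ρ)) with hMg
    have hMfnn : ∀ b, 0 ≤ Mf b := fun b => Real.rpow_nonneg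
      (div_nonneg (Finset.sum_nonneg fun s _ => Real.rpow_nonneg (hf _) _) (by positivity)) _
    have hMgnn : ∀ b, 0 ≤ Mg b := fun b => Real.rpow_nonneg
      (div_nonneg (Finset.sum_nonneg fun s _ => Real.rpow_nonneg (hg _) _) (by positivity)) _
    have hihbc : ∀ b c : Bool,
        ∑ s : Fin n → Bool, ∑ t : Fin n → Bool, Wt ρ s t * (f (Fin.cons b s) * g (Fin.cons c t))
          ≤ Mf b * Mg c := by
      intro b c
      exact ih (fun s => f (Fin.cons b s)) (fun t => g (Fin.cons c t))
        (fun s => hf _) (fun t => hg _)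
    -- rewrite the big sum
    have split : ∑ s : Fin (n+1) → Bool, ∑ t : Fin (n+1) → Bool, Wt ρ s t * (f s * g t)
        = ∑ b : Bool, ∑ c : Bool, wB ρ b c *
            ∑ s : Fin n → Bool, ∑ t : Fin n → Bool,
              Wt ρ s t * (f (Fin.cons b s) * g (Fin.cons c t)) := by
      rw [sum_cube_succ (fun s => ∑ t : Fin (n+1) → Bool, Wt ρ s t * (f s * g t))]
      apply Finset.sum_congr rfl; intro b _
      calc ∑ s : Fin n → Bool, ∑ t : Fin (n+1) → Bool,
              Wt ρ (Fin.cons b s) t * (f (Fin.cons b s) * g t)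
          = ∑ s : Fin n → Bool, ∑ c : Bool, ∑ t : Fin n → Bool,
              wB ρ b c * (Wt ρ s t * (f (Fin.cons b s) * g (Fin.cons c t))) := by
            apply Finset.sum_congr rfl; intro s _
            rw [sum_cube_succ (fun t => Wt ρ (Fin.cons b s) t * (f (Fin.cons b s) * g t))]
            apply Finset.sum_congr rfl; intro c _
            apply Finset.sum_congr rfl; intro t _
            rw [Wt_cons]; ring
        _ = ∑ c : Bool, ∑ s : Fin n → Bool, ∑ t : Fin n → Bool,
              wB ρ b c * (Wt ρ s t * (f (Fin.cons b s) * g (Fin.cons c t))) :=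
            Finset.sum_comm
        _ = ∑ c : Bool, wB ρ b c * ∑ s : Fin n → Bool, ∑ t : Fin n → Bool,
              Wt ρ s t * (f (Fin.cons b s) * g (Fin.cons c t)) := by
            apply Finset.sum_congr rfl; intro c _
            rw [Finset.mul_sum]
            apply Finset.sum_congr rfl; intro s _
            rw [Finset.mul_sum]
    have step1 : ∑ s : Fin (n+1) → Bool, ∑ t : Fin (n+1) → Bool, Wt ρ s t * (f s * g t)
        ≤ ∑ b : Bool, ∑ c : Bool, wB ρ b c * (Mf b * Mg c) := by
      rw [split]
      apply Finset.sum_le_sum; intro b _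
      apply Finset.sum_le_sum; intro c _
      exact mul_le_mul_of_nonneg_left (hihbc b c) (wB_nonneg hρ0 hρ1 b c)
    have step2 : ∑ b : Bool, ∑ c : Bool, wB ρ b c * (Mf b * Mg c)
        ≤ ((Mf false ^ (1+ρ) + Mf true ^ (1+ρ))/2) ^ (1/(1+ρ))
          * ((Mg false ^ (1+ρ) + Mg true ^ (1+ρ))/2) ^ (1/(1+ρ)) := by
      have h2p := two_point hρ0 hρ1 (hMfnn false) (hMfnn true) (hMgnn false) (hMgnn true)
      calc ∑ b : Bool, ∑ c : Bool, wB ρ b c * (Mf b * Mg c)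
          = (1+ρ)/4 * (Mf false * Mg false + Mf true * Mg true)
            + (1-ρ)/4 * (Mf false * Mg true + Mf true * Mg false) := by
            rw [Fintype.sum_bool, Fintype.sum_bool, Fintype.sum_bool]
            unfold wB
            simp only [if_true, if_false]
            norm_num
            ring
        _ ≤ _ := h2p
    have unfoldM : ∀ (h : (Fin (n+1) → Bool) → ℝ), (∀ s, 0 ≤ h s) →
        ((((∑ s : Fin n → Bool, h (Fin.cons false s) ^ (1+ρ)) / 2^n) ^ (1/(1+ρ))) ^ (1+ρ)
          + (((∑ s : Fin n → Bool, h (Fin.cons true s) ^ (1+ρ)) / 2^n) ^ (1/(1+ρ))) ^ (1+ρ))/2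
        = (∑ s : Fin (n+1) → Bool, h s ^ (1+ρ)) / 2^(n+1) := by
      intro h hh
      have hinv : ∀ X : ℝ, 0 ≤ X → (X ^ (1/(1+ρ))) ^ (1+ρ) = X := by
        intro X hX
        rw [← Real.rpow_mul hX, one_div, inv_mul_cancel₀ hq.ne', Real.rpow_one]
      have hnn : ∀ b : Bool, 0 ≤ (∑ s : Fin n → Bool, h (Fin.cons b s) ^ (1+ρ)) / 2^n :=
        fun b => div_nonneg (Finset.sum_nonneg fun s _ => Real.rpow_nonneg (hh _) _) (by positivity)
      rw [hinv _ (hnn false), hinv _ (hnn true),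
        sum_cube_succ (fun s => h s ^ (1+ρ)), Fintype.sum_bool]
      ring
    calc ∑ s : Fin (n+1) → Bool, ∑ t : Fin (n+1) → Bool, Wt ρ s t * (f s * g t)
        ≤ ((Mf false ^ (1+ρ) + Mf true ^ (1+ρ))/2) ^ (1/(1+ρ))
          * ((Mg false ^ (1+ρ) + Mg true ^ (1+ρ))/2) ^ (1/(1+ρ)) := step1.trans step2
      _ = _ := by
          rw [hMf, hMg]
          rw [unfoldM f hf, unfoldM g hg]

lemma hamm_le {d : ℕ} (s t : Cube d) : hamm s t ≤ d := by
  calc (Finset.univ.filter fun i => s i ≠ t i).card ≤ (Finset.univ : Finset (Fin d)).card :=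
        Finset.card_filter_le _ _
    _ = d := Finset.card_fin d

lemma Wt_eq_pow {ρ : ℝ} {d : ℕ} (s t : Cube d) :
    Wt ρ s t = ((1-ρ)/4) ^ (hamm s t) * ((1+ρ)/4) ^ (d - hamm s t) := by
  unfold Wt
  rw [← Finset.prod_filter_mul_prod_filter_not Finset.univ (fun i => s i ≠ t i)]
  congr 1
  · rw [Finset.prod_congr rfl (g := fun _ => (1-ρ)/4) ?_, Finset.prod_const]
    · rfl
    · intro i hi
      simp only [Finset.mem_filter] at hi
      unfold wB
      rw [if_neg hi.2]
  · rw [Finset.prod_congr rfl (g := fun _ => (1+ρ)/4) ?_, Finset.prod_const]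
    · congr 1
      have h := Finset.card_filter_add_card_filter_not
        (s := (Finset.univ : Finset (Fin d))) (p := fun i => s i ≠ t i)
      simp only [Finset.card_fin] at h
      unfold hamm
      omega
    · intro i hi
      simp only [Finset.mem_filter, not_not] at hi
      unfold wB
      rw [if_pos hi.2]

lemma stab_le {ρ : ℝ} (hρ0 : 0 ≤ ρ) (hρ1 : ρ ≤ 1) {d : ℕ} (A : Finset (Cube d)) :
    ∑ s ∈ A, ∑ t ∈ A, Wt ρ s t ≤ (((A.card : ℝ))/2^d) ^ ((2:ℝ)/(1+ρ)) := by
  have hq : (0:ℝ) < 1+ρ := by linarith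
  set χ : Cube d → ℝ := fun s => if s ∈ A then 1 else 0 with hχ
  have hχnn : ∀ s, 0 ≤ χ s := by
    intro s; rw [hχ]; dsimp only; split <;> norm_num
  have h := tensor hρ0 hρ1 d χ χ hχnn hχnn
  have hL : ∑ s : Cube d, ∑ t : Cube d, Wt ρ s t * (χ s * χ t)
      = ∑ s ∈ A, ∑ t ∈ A, Wt ρ s t := by
    have inner : ∀ s, ∑ t : Cube d, Wt ρ s t * χ t = ∑ t ∈ A, Wt ρ s t := by
      intro s
      rw [hχ]
      simp only [mul_ite, mul_one, mul_zero]
      rw [Finset.sum_ite_mem, Finset.univ_inter]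
    calc ∑ s : Cube d, ∑ t : Cube d, Wt ρ s t * (χ s * χ t)
        = ∑ s : Cube d, χ s * (∑ t : Cube d, Wt ρ s t * χ t) := by
          apply Finset.sum_congr rfl; intro s _
          rw [Finset.mul_sum]
          apply Finset.sum_congr rfl; intro t _
          ring
      _ = ∑ s : Cube d, χ s * (∑ t ∈ A, Wt ρ s t) := by
          apply Finset.sum_congr rfl; intro s _
          rw [inner]
      _ = ∑ s ∈ A, ∑ t ∈ A, Wt ρ s t := by
          rw [hχ]
          simp only [ite_mul, one_mul, zero_mul]
          rw [Finset.sum_ite_mem, Finset.univ_inter]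
  have hpow : ∑ s : Cube d, χ s ^ ((1:ℝ)+ρ) = (A.card : ℝ) := by
    rw [hχ]
    have : ∀ s : Cube d, ((if s ∈ A then (1:ℝ) else 0) ^ ((1:ℝ)+ρ)) = if s ∈ A then (1:ℝ) else 0 := by
      intro s
      split
      · exact Real.one_rpow _
      · exact Real.zero_rpow hq.ne'
    rw [Finset.sum_congr rfl (fun s _ => this s), Finset.sum_ite_mem, Finset.univ_inter,
      Finset.sum_const, nsmul_eq_mul, mul_one]
  rw [hL, hpow] at h
  calc ∑ s ∈ A, ∑ t ∈ A, Wt ρ s t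
      ≤ ((A.card : ℝ)/2^d) ^ ((1:ℝ)/(1+ρ)) * ((A.card : ℝ)/2^d) ^ ((1:ℝ)/(1+ρ)) := h
    _ = (((A.card : ℝ))/2^d) ^ ((2:ℝ)/(1+ρ)) := by
        rw [← Real.rpow_add' (by positivity) (by
          rw [← add_div]
          positivity)]
        congr 1
        ring

lemma noiseCap_eq' {d : ℕ} {s t : Cube d} (hst : s ≠ t) :
    noiseCap d s t = Real.sqrt d * 2^d * Wt (1 - 1/Real.sqrt d) s t := by
  have hle := hamm_le s t
  rw [Wt_eq_pow]
  unfold noiseCap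
  rw [if_neg hst]
  have h1 : (1 - (1 - 1/Real.sqrt d))/4 = noiseP d / 2 := by unfold noiseP; ring
  have h2 : (1 + (1 - 1/Real.sqrt d))/4 = (1 - noiseP d) / 2 := by unfold noiseP; ring
  rw [h1, h2, div_pow, div_pow]
  have h3 : (2:ℝ)^(hamm s t) * 2^(d - hamm s t) = 2^d := by
    rw [← pow_add]; congr 1; omega
  rw [div_mul_div_comm, h3]
  field_simp

lemma cut_ge {d : ℕ} (A : Finset (Cube d)) :
    Real.sqrt d * 2^d * (((A.card:ℝ)/2^d)
        - ((A.card:ℝ)/2^d) ^ ((2:ℝ)/(1+(1 - 1/Real.sqrt d))))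
      ≤ cutFun (noiseCap d) A := by
  set ρ : ℝ := 1 - 1/Real.sqrt d with hρdef
  have hρ1 : ρ ≤ 1 := by
    rw [hρdef]
    have : 0 ≤ 1/Real.sqrt d := by positivity
    linarith
  have hρ0 : 0 ≤ ρ := by
    rw [hρdef]
    rcases Nat.eq_zero_or_pos d with h0 | hpos
    · subst h0; norm_num
    · have h1 : (1:ℝ) ≤ Real.sqrt d := by
        rw [show (1:ℝ) = Real.sqrt 1 from (Real.sqrt_one).symm]
        apply Real.sqrt_le_sqrt
        exact_mod_cast hpos
      have h2 : 1/Real.sqrt d ≤ 1 := by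
        rw [div_le_one (by linarith)]
        exact h1
      linarith
  have hcut : cutFun (noiseCap d) A
      = Real.sqrt d * 2^d * ∑ s ∈ A, ∑ t ∈ Aᶜ, Wt ρ s t := by
    unfold cutFun
    rw [Finset.mul_sum]
    apply Finset.sum_congr rfl; intro s hs
    rw [Finset.mul_sum]
    apply Finset.sum_congr rfl; intro t ht
    have hst : s ≠ t := by
      intro h; subst h
      exact (Finset.mem_compl.1 ht) hs
    rw [noiseCap_eq' hst, hρdef]
  have hrow : ∀ s : Cube d, ∑ t ∈ Aᶜ, Wt ρ s t = (1/2)^d - ∑ t ∈ A, Wt ρ s t := by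
    intro s
    have := Finset.sum_add_sum_compl A (fun t => Wt ρ s t)
    rw [Wt_rowsum s] at this
    linarith
  have hsplit : ∑ s ∈ A, ∑ t ∈ Aᶜ, Wt ρ s t
      = (A.card : ℝ)/2^d - ∑ s ∈ A, ∑ t ∈ A, Wt ρ s t := by
    rw [Finset.sum_congr rfl (fun s _ => hrow s), Finset.sum_sub_distrib,
      Finset.sum_const, nsmul_eq_mul]
    congr 1
    rw [div_pow, one_pow]
    ring
  rw [hcut, hsplit]
  apply mul_le_mul_of_nonneg_left _ (by positivity)
  have := stab_le hρ0 hρ1 A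
  linarith

lemma cut_compl {d : ℕ} (A : Finset (Cube d)) :
    cutFun (noiseCap d) Aᶜ = cutFun (noiseCap d) A := by
  have hsymm : ∀ s t : Cube d, noiseCap d s t = noiseCap d t s := by
    intro s t
    unfold noiseCap
    have h1 : hamm s t = hamm t s := by
      unfold hamm
      congr 1
      apply Finset.filter_congr
      intro i _
      simp [ne_comm]
    rw [h1]
    by_cases h : s = t
    · rw [if_pos h, if_pos h.symm]
    · rw [if_neg h, if_neg (Ne.symm h)]
  unfold cutFun
  rw [compl_compl, Finset.sum_comm]
  apply Finset.sum_congr rfl; intro s _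
  apply Finset.sum_congr rfl; intro t _
  exact hsymm t s

lemma scalar {d : ℕ} (hd : 1 ≤ d) {β : ℝ} (hβ0 : 0 < β) (hβ1 : β ≤ 1/2) :
    (1/4) * β * min (Real.log (1/β)) (Real.sqrt d)
      ≤ Real.sqrt d * (β - β ^ ((2:ℝ)/(1+(1 - 1/Real.sqrt d)))) := by
  have hD1 : (1:ℝ) ≤ Real.sqrt d := by
    rw [show (1:ℝ) = Real.sqrt 1 from (Real.sqrt_one).symm]
    apply Real.sqrt_le_sqrt
    exact_mod_cast hd
  set D : ℝ := Real.sqrt d with hDdef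
  clear_value D
  have hD0 : (0:ℝ) < D := by linarith
  have hu1 : 1/D ≤ 1 := by rw [div_le_one hD0]; exact hD1
  have hu0 : 0 < 1/D := by positivity
  set L : ℝ := Real.log (1/β) with hLdef
  clear_value L
  have hL : 0 < L := by
    rw [hLdef]
    apply Real.log_pos
    rw [lt_div_iff₀ hβ0]
    linarith
  set q : ℝ := 1 + (1 - 1/D) with hqdef
  clear_value q
  have hq1 : 1 ≤ q := by rw [hqdef]; linarith
  have hq2 : q ≤ 2 := by rw [hqdef]; linarith
  have hq0 : 0 < q := by linarith
  set ε : ℝ := 1/(2*D) with hεdef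
  clear_value ε
  have hε0 : 0 < ε := by rw [hεdef]; positivity
  have h2q : 1 + ε ≤ 2/q := by
    rw [le_div_iff₀ hq0, hεdef, hqdef]
    have h1 : (1 + 1/(2*D)) * (1 + (1 - 1/D)) = 2 - (1/D)*(1/D)/2 := by
      field_simp
      ring
    rw [h1]
    nlinarith
  have step1 : β ^ ((2:ℝ)/q) ≤ β ^ (1+ε) :=
    Real.rpow_le_rpow_of_exponent_ge hβ0 (by linarith) h2q
  have step2 : β ^ (1+ε) = β * β ^ ε := by
    rw [Real.rpow_add hβ0, Real.rpow_one]
  have hβε : β ^ ε = Real.exp (-(ε*L)) := by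
    rw [Real.rpow_def_of_pos hβ0]
    congr 1
    have : Real.log β = -L := by
      rw [hLdef, one_div, Real.log_inv, neg_neg]
    rw [this]
    ring
  have hexpm1 : Real.exp (-1) ≤ 1/2 := by
    rw [Real.exp_neg]
    rw [inv_le_comm₀ (Real.exp_pos 1) (by norm_num : (0:ℝ) < 1/2)]
    norm_num
    linarith [Real.add_one_le_exp 1]
  have hexp : Real.exp (-(ε*L)) ≤ 1 - (1/2) * min (ε*L) 1 := by
    have hy0 : 0 < ε*L := mul_pos hε0 hL
    rcases le_or_gt 1 (ε*L) with hy | hy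
    · rw [min_eq_right hy]
      have : Real.exp (-(ε*L)) ≤ Real.exp (-1) := Real.exp_le_exp.2 (by linarith)
      linarith
    · rw [min_eq_left hy.le]
      have hconv := convexOn_exp.2 (Set.mem_univ (-1:ℝ)) (Set.mem_univ (0:ℝ))
        (le_of_lt hy0) (by linarith : (0:ℝ) ≤ 1 - ε*L) (by ring)
      simp only [smul_eq_mul, mul_zero, add_zero, mul_neg, mul_one, Real.exp_zero] at hconv
      nlinarith [hconv, hy0, hexpm1]
  -- assemble
  have main : (1/2) * min (ε*L) 1 ≤ 1 - β ^ ε := by rw [hβε]; linarith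
  have m3 : β * (1 - β ^ ε) = β - β ^ ((1:ℝ)+ε) := by rw [step2]; ring
  have m5 : D * (β * ((1/2) * min (ε*L) 1)) ≤ D * (β - β ^ ((2:ℝ)/q)) := by
    apply mul_le_mul_of_nonneg_left _ hD0.le
    have := mul_le_mul_of_nonneg_left main hβ0.le
    linarith [this, step1, m3.symm]
  have k2 : min (ε*L) 1 = min L (2*D) / (2*D) := by
    have h1 : ε*L = L/(2*D) := by rw [hεdef]; ring
    have h2 : (1:ℝ) = (2*D)/(2*D) := (div_self (by linarith : (2*D) ≠ 0)).symm
    rw [h1, h2, min_div_div_right (by linarith : (0:ℝ) ≤ 2*D)]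
  have k3 : min L D ≤ min L (2*D) := min_le_min (le_refl L) (by linarith)
  have m6 : D * (β * ((1/2) * min (ε*L) 1)) = β * min L (2*D) / 4 := by
    rw [k2]
    field_simp
    ring
  have m7 : (1/4) * β * min L D ≤ β * min L (2*D) / 4 := by nlinarith
  calc (1/4) * β * min L D ≤ β * min L (2*D) / 4 := m7
    _ = D * (β * ((1/2) * min (ε*L) 1)) := m6.symm
    _ ≤ D * (β - β ^ ((2:ℝ)/q)) := m5

/-- There is a universal constant `c > 0` such that for every `d ≥ 1`
and every proper nonempty subset `A` of terminals, the noise sparsifier satisfies the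
small-set expansion bound `h'(A) ≥ c · bal(A) · k · min(ln(1/bal(A)), √d)`. -/
theorem noise_sparsifier_small_set_expansion :
    ∃ c : ℝ, 0 < c ∧ ∀ d : ℕ, 1 ≤ d → ∀ A : Finset (Cube d),
      A ≠ ∅ → A ≠ Finset.univ →
      c * bal d A * 2 ^ d * min (Real.log (1 / bal d A)) (Real.sqrt d)
        ≤ cutFun (noiseCap d) A := by
  refine ⟨1/4, by norm_num, ?_⟩
  intro d hd A hne hnu
  have hcard_univ : Fintype.card (Cube d) = 2^d := by
    simp [Fintype.card_fun]
  have ha1 : 1 ≤ A.card := Finset.card_pos.2 (Finset.nonempty_of_ne_empty hne)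
  have ha2 : A.card < 2^d := by
    have h := Finset.card_lt_card (Finset.ssubset_univ_iff.2 hnu)
    rwa [Finset.card_univ, hcard_univ] at h
  set m : ℕ := min A.card (2^d - A.card) with hm
  have hm1 : 1 ≤ m := le_min ha1 (Nat.sub_pos_of_lt ha2)
  have hm2 : m + m ≤ 2^d := by
    have h := add_le_add (min_le_left A.card (2^d - A.card)) (min_le_right A.card (2^d - A.card))
    rwa [Nat.add_sub_cancel' ha2.le, ← hm] at h
  have hbal : bal d A = (m:ℝ)/2^d := by
    unfold bal
    rw [← hm]
  have hβ0 : (0:ℝ) < (m:ℝ)/2^d :=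
    div_pos (by exact_mod_cast hm1) (by positivity)
  have hβhalf : (m:ℝ)/2^d ≤ 1/2 := by
    rw [div_le_div_iff₀ (by positivity) (by norm_num : (0:ℝ) < 2)]
    have h : ((m + m : ℕ):ℝ) ≤ ((2^d : ℕ):ℝ) := Nat.cast_le.2 hm2
    push_cast at h
    linarith
  have key : ∀ B : Finset (Cube d), B.card = m →
      cutFun (noiseCap d) B = cutFun (noiseCap d) A →
      1/4 * bal d A * 2 ^ d * min (Real.log (1 / bal d A)) (Real.sqrt d)
        ≤ cutFun (noiseCap d) A := by
    intro B hB hBA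
    rw [← hBA, hbal]
    have h1 := cut_ge (d := d) B
    rw [hB] at h1
    have h2 := scalar hd hβ0 hβhalf
    calc 1/4 * ((m:ℝ)/2^d) * 2^d * min (Real.log (1/((m:ℝ)/2^d))) (Real.sqrt d)
        = 2^d * (1/4 * ((m:ℝ)/2^d) * min (Real.log (1/((m:ℝ)/2^d))) (Real.sqrt d)) := by ring
      _ ≤ 2^d * (Real.sqrt d * (((m:ℝ)/2^d) - ((m:ℝ)/2^d) ^ ((2:ℝ)/(1+(1 - 1/Real.sqrt d))))) :=
          mul_le_mul_of_nonneg_left h2 (by positivity)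
      _ = Real.sqrt d * 2^d * (((m:ℝ)/2^d) - ((m:ℝ)/2^d) ^ ((2:ℝ)/(1+(1 - 1/Real.sqrt d)))) := by
          ring
      _ ≤ cutFun (noiseCap d) B := h1
  rcases le_or_gt A.card (2^d - A.card) with h | h
  · refine key A ?_ rfl
    rw [hm, min_eq_left h]
  · refine key Aᶜ ?_ (cut_compl A)
    rw [Finset.card_compl, hcard_univ, hm, min_eq_right h.le]
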